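/- Let ζ ∈ ℝ, b ≠ 0, φ ∈ ℝ, let K be a finite set, A : K → ℝ, and let ω_k ≠ 0 for each k ∈ K. The function f(τ) := −(ζ/b²) Σ_{k∈K} (A_k/(1 + ω_k²)) [ (cos(ω_k τ + φ) − cos φ)/ω_k − sin(ω_k τ + φ) + e^τ sin φ ] satisfies f''(τ) = f'(τ) − (ζ/b²) Σ_{k∈K} A_k sin(ω_k τ + φ) for all τ ∈ ℝ, with f(0) = 0 and f'(0) = (ζ/b²) cos φ · Σ_{k∈K} A_k ω_k/(1 + ω_k²). -/

import Mathlib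

private lemma lin_deriv (w φ : ℝ) (τ : ℝ) :
    HasDerivAt (fun τ : ℝ => w * τ + φ) w τ := by
  simpa using ((hasDerivAt_id τ).const_mul w).add_const φ

private lemma key1 (a w φ : ℝ) (hw : w ≠ 0) (τ : ℝ) :
    HasDerivAt (fun τ => a * ((Real.cos (w * τ + φ) - Real.cos φ) / w
        - Real.sin (w * τ + φ) + Real.exp τ * Real.sin φ))
      (a * (-(Real.sin (w * τ + φ)) - w * Real.cos (w * τ + φ)
        + Real.exp τ * Real.sin φ)) τ := by
  have h1 := lin_deriv w φ τ
  have hcos := (Real.hasDerivAt_cos (w * τ + φ)).comp τ h1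
  have hsin := (Real.hasDerivAt_sin (w * τ + φ)).comp τ h1
  have hexp := (Real.hasDerivAt_exp τ).mul_const (Real.sin φ)
  have := (((hcos.sub_const (Real.cos φ)).div_const w).sub hsin).add hexp
  have h2 := this.const_mul a
  refine HasDerivAt.congr_deriv h2 ?_
  field_simp

private lemma key2 (a w φ : ℝ) (τ : ℝ) :
    HasDerivAt (fun τ => a * (-(Real.sin (w * τ + φ)) - w * Real.cos (w * τ + φ)
        + Real.exp τ * Real.sin φ))
      (a * (-(w * Real.cos (w * τ + φ)) + w ^ 2 * Real.sin (w * τ + φ)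
        + Real.exp τ * Real.sin φ)) τ := by
  have h1 := lin_deriv w φ τ
  have hcos := ((Real.hasDerivAt_cos (w * τ + φ)).comp τ h1).const_mul w
  have hsin := (Real.hasDerivAt_sin (w * τ + φ)).comp τ h1
  have hexp := (Real.hasDerivAt_exp τ).mul_const (Real.sin φ)
  have h2 := ((hsin.neg.sub hcos).add hexp).const_mul a
  refine HasDerivAt.congr_deriv h2 ?_
  ring

/-- Equation (4.5): with the special choice of initial velocity, the fast component of the
pre-capture dynamics satisfies the linearized ODE with `f(0) = 0` and
`f'(0) = (ζ/b²) cos φ ∑_k A_k ω_k/(1+ω_k²)`. -/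
theorem fast_component_special_solution
    (ζ b φ : ℝ) (hb : b ≠ 0)
    (K : Finset ℤ) (A ω : ℤ → ℝ) (hω : ∀ k ∈ K, ω k ≠ 0)
    (f : ℝ → ℝ)
    (hf : ∀ τ, f τ = -(ζ / b ^ 2) * ∑ k ∈ K, (A k / (1 + (ω k) ^ 2)) *
      ((Real.cos (ω k * τ + φ) - Real.cos φ) / ω k - Real.sin (ω k * τ + φ)
        + Real.exp τ * Real.sin φ)) :
    (∀ τ, deriv (deriv f) τ
      = deriv f τ - (ζ / b ^ 2) * ∑ k ∈ K, A k * Real.sin (ω k * τ + φ)) ∧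
    f 0 = 0 ∧
    deriv f 0 = (ζ / b ^ 2) * Real.cos φ * ∑ k ∈ K, A k * ω k / (1 + (ω k) ^ 2) := by
  have hfe : f = fun τ => -(ζ / b ^ 2) * ∑ k ∈ K, (A k / (1 + (ω k) ^ 2)) *
      ((Real.cos (ω k * τ + φ) - Real.cos φ) / ω k - Real.sin (ω k * τ + φ)
        + Real.exp τ * Real.sin φ) := funext hf
  set c : ℝ := ζ / b ^ 2 with hc
  -- first derivative
  have hD1 : ∀ τ, HasDerivAt f
      (-c * ∑ k ∈ K, (A k / (1 + (ω k) ^ 2)) *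
        (-(Real.sin (ω k * τ + φ)) - ω k * Real.cos (ω k * τ + φ)
          + Real.exp τ * Real.sin φ)) τ := by
    intro τ
    rw [hfe]
    exact (HasDerivAt.fun_sum fun k hk =>
      key1 (A k / (1 + (ω k) ^ 2)) (ω k) φ (hω k hk) τ).const_mul (-c)
  have hderiv1 : deriv f = fun τ =>
      -c * ∑ k ∈ K, (A k / (1 + (ω k) ^ 2)) *
        (-(Real.sin (ω k * τ + φ)) - ω k * Real.cos (ω k * τ + φ)
          + Real.exp τ * Real.sin φ) :=
    funext fun τ => (hD1 τ).deriv
  have hD2 : ∀ τ, HasDerivAt (deriv f)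
      (-c * ∑ k ∈ K, (A k / (1 + (ω k) ^ 2)) *
        (-(ω k * Real.cos (ω k * τ + φ)) + (ω k) ^ 2 * Real.sin (ω k * τ + φ)
          + Real.exp τ * Real.sin φ)) τ := by
    intro τ
    rw [hderiv1]
    exact (HasDerivAt.fun_sum fun k hk =>
      key2 (A k / (1 + (ω k) ^ 2)) (ω k) φ τ).const_mul (-c)
  refine ⟨?_, ?_, ?_⟩
  · intro τ
    rw [(hD2 τ).deriv, (hD1 τ).deriv]
    rw [show (-c * ∑ k ∈ K, (A k / (1 + (ω k) ^ 2)) *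
        (-(Real.sin (ω k * τ + φ)) - ω k * Real.cos (ω k * τ + φ)
          + Real.exp τ * Real.sin φ)) - c * ∑ k ∈ K, A k * Real.sin (ω k * τ + φ)
        = -c * ((∑ k ∈ K, (A k / (1 + (ω k) ^ 2)) *
        (-(Real.sin (ω k * τ + φ)) - ω k * Real.cos (ω k * τ + φ)
          + Real.exp τ * Real.sin φ)) + ∑ k ∈ K, A k * Real.sin (ω k * τ + φ)) by ring]
    rw [← Finset.sum_add_distrib]
    congr 1
    refine Finset.sum_congr rfl fun k hk => ?_
    have hw2 : (1 : ℝ) + (ω k) ^ 2 ≠ 0 := by positivity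
    field_simp
    ring
  · rw [hf 0]
    rw [Finset.sum_eq_zero fun k hk => by simp]; simp
  · rw [(hD1 0).deriv]
    have : (∑ k ∈ K, (A k / (1 + (ω k) ^ 2)) *
        (-(Real.sin (ω k * 0 + φ)) - ω k * Real.cos (ω k * 0 + φ)
          + Real.exp 0 * Real.sin φ))
        = ∑ k ∈ K, (-(Real.cos φ)) * (A k * ω k / (1 + (ω k) ^ 2)) := by
      refine Finset.sum_congr rfl fun k hk => ?_
      simp only [mul_zero, zero_add, Real.exp_zero, one_mul]
      ring
    rw [this, ← Finset.mul_sum]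
    ring
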